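/- (Poisson lower tail bound) If X is a Poisson random variable with mean λ > 0 and 0 ≤ k ≤ λ, then P(X ≤ k) ≤ exp(−λ · H(k/λ)), where H(x) = x·ln x − x + 1 and H(0) = 1. -/

import Mathlib

open ProbabilityTheory
open scoped NNReal

noncomputable def H (x : ℝ) : ℝ := x * Real.log x - x + 1

/-- Poisson lower tail bound: `P(Po(λ) ≤ k) ≤ exp (-λ H(k/λ))` for `0 ≤ k ≤ λ`. -/
theorem poisson_lower_tail (lam : ℝ≥0) (k : ℝ) (hlam : 0 < lam) (hk0 : 0 ≤ k)
    (hk : k ≤ (lam : ℝ)) :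
    (∑' j : {j : ℕ // (j : ℝ) ≤ k}, poissonPMFReal lam j) ≤
      Real.exp (-(lam : ℝ) * H (k / lam)) := by
  have hlam' : (0:ℝ) < lam := by exact_mod_cast hlam
  rcases eq_or_lt_of_le hk0 with h0 | hkpos
  · -- k = 0
    subst h0
    have huniq : ∀ b : {j : ℕ // (j : ℝ) ≤ (0:ℝ)}, b = ⟨0, by norm_num⟩ := by
      intro b
      ext
      exact_mod_cast le_antisymm b.2 (Nat.cast_nonneg b.1)
    have : (∑' j : {j : ℕ // (j : ℝ) ≤ (0:ℝ)}, poissonPMFReal lam j)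
        = poissonPMFReal lam 0 := by
      apply tsum_eq_single (⟨0, by norm_num⟩ : {j : ℕ // (j : ℝ) ≤ (0:ℝ)})
      intro b hb
      exact absurd (huniq b) hb
    rw [this]
    have : H (0 / (lam:ℝ)) = 1 := by simp [H]
    rw [this]
    simp [poissonPMFReal]
  · -- k > 0
    set r : ℝ := k / lam with hr_def
    have hr : 0 < r := div_pos hkpos hlam'
    have hr1 : r ≤ 1 := (div_le_one hlam').mpr hk
    have hlr : (lam:ℝ) * r = k := by rw [hr_def]; field_simp
    set g : ℕ → ℝ := fun j => poissonPMFReal lam j * r ^ ((j:ℝ) - k) with hg_def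
    have hgeq : ∀ j : ℕ, g j = (Real.exp (-(lam:ℝ)) * r ^ (-k : ℝ)) * (k ^ j / (Nat.factorial j : ℝ)) := by
      intro j
      have h1 : r ^ ((j:ℝ) - k) = r ^ (j:ℝ) * r ^ (-k:ℝ) := by
        rw [← Real.rpow_add hr]; ring_nf
      have h2 : r ^ ((j:ℕ):ℝ) = r ^ j := Real.rpow_natCast r j
      simp only [hg_def, poissonPMFReal, h1, h2]
      rw [← hlr, mul_pow]
      ring
    have hsum : HasSum g (Real.exp (-(lam:ℝ) * H r)) := by
      have h := (NormedSpace.expSeries_div_hasSum_exp k).mul_left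
        (Real.exp (-(lam:ℝ)) * r ^ (-k : ℝ))
      have hval : (Real.exp (-(lam:ℝ)) * r ^ (-k : ℝ)) * NormedSpace.exp k
          = Real.exp (-(lam:ℝ) * H r) := by
        rw [← Real.exp_eq_exp_ℝ, Real.rpow_def_of_pos hr, ← Real.exp_add, ← Real.exp_add]
        congr 1
        have h1 : (lam:ℝ) * (r * Real.log r) = k * Real.log r := by
          rw [← mul_assoc, hlr]
        have : -(lam:ℝ) * H r = -k * Real.log r + k - lam := by
          simp only [H]; linear_combination -h1 + hlr
        rw [this]; ring
      rw [← hval]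
      convert h using 2 with j
      exacts [rfl, hgeq j]
    refine le_trans (Summable.tsum_le_tsum_of_inj (Subtype.val : {j : ℕ // (j : ℝ) ≤ k} → ℕ)
      Subtype.val_injective
      (fun c _ => ?_) (fun b => ?_)
      ((poissonPMFRealSum lam).summable.subtype _) hsum.summable) hsum.tsum_eq.le
    · exact mul_nonneg poissonPMFReal_nonneg
        (Real.rpow_nonneg hr.le _)
    · have h1 : (1:ℝ) ≤ r ^ ((b.1:ℝ) - k) :=
        Real.one_le_rpow_of_pos_of_le_one_of_nonpos hr hr1 (sub_nonpos.2 b.2)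
      exact le_mul_of_one_le_right poissonPMFReal_nonneg h1
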